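/- Let x : V × V → {0,1} and y : C^U × U → {0,1} satisfy the degree constraints and the flow conservation constraints. Then the connectivity constraints hold for every proper subset S ⊊ V with 0 ∈ S if and only if every truck-served customer (every j ∈ C with Σ_{k∈U} y_j^k = 0) is reachable from the depot 0 by a directed path in the digraph with arc set {(i,j) : x_{ij} = 1}. -/
import Mathlib


open Finset

private lemma cross_cut {α : Type*} {r : α → α → Prop} {S : α → Prop} {a j : α}
    (h : Relation.ReflTransGen r a j) (ha : S a) (hj : ¬ S j) :
    ∃ p q, S p ∧ ¬ S q ∧ r p q := by
  induction h with
  | refl => exact absurd ha hj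
  | @tail b c hab hbc ih =>
    by_cases hb : S b
    · exact ⟨b, c, hb, hj, hbc⟩
    · exact ih hb

/-- for binary `x`, `y` satisfying the degree constraints and the flow
conservation constraints, all connectivity constraints hold if and only if every
truck-served customer is reachable from the depot `0` by a directed path in the digraph
with arc set `{(i,j) : x i j = 1}`. -/
theorem connectivity_iff_reachable
    {n : ℕ} {U : Type*} [Fintype U]
    (CU : Finset (Fin (n + 1))) (hCU : (0 : Fin (n + 1)) ∉ CU)
    (x : Fin (n + 1) → Fin (n + 1) → ℝ) (y : Fin (n + 1) → U → ℝ)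
    (hx : ∀ i j, x i j = 0 ∨ x i j = 1)
    (hy : ∀ i k, y i k = 0 ∨ y i k = 1)
    (hyCU : ∀ i, i ∉ CU → ∀ k, y i k = 0)
    (hdegIn : ∀ j : Fin (n + 1), j ≠ 0 → (∑ i, x i j) + (∑ k, y j k) = 1)
    (hdegOut : ∀ j : Fin (n + 1), j ≠ 0 → (∑ i, x j i) + (∑ k, y j k) = 1)
    (hflow : ∀ i : Fin (n + 1), (∑ j, x j i) = (∑ j, x i j)) :
    (∀ S : Finset (Fin (n + 1)), (0 : Fin (n + 1)) ∈ S → S ≠ Finset.univ →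
        1 ≤ (∑ i ∈ S, ∑ j ∈ Sᶜ, x i j) + (∑ j ∈ Sᶜ, ∑ k, y j k)) ↔
    (∀ j : Fin (n + 1), j ≠ 0 → (∑ k, y j k) = 0 →
        Relation.ReflTransGen (fun a b => x a b = 1) 0 j) := by
  classical
  have hxnn : ∀ i j, 0 ≤ x i j := by
    intro i j; rcases hx i j with h | h <;> simp [h]
  have hynn : ∀ i k, 0 ≤ y i k := by
    intro i k; rcases hy i k with h | h <;> simp [h]
  have hy0 : (∑ k, y (0 : Fin (n + 1)) k) = 0 :=
    Finset.sum_eq_zero fun k _ => hyCU 0 hCU k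
  have hyone : ∀ i, (∑ k, y i k) ≠ 0 → 1 ≤ ∑ k, y i k := by
    intro i h
    obtain ⟨k, _, hk⟩ := Finset.exists_ne_zero_of_sum_ne_zero h
    have h1 : y i k = 1 := (hy i k).resolve_left hk
    calc (1 : ℝ) = y i k := h1.symm
      _ ≤ ∑ k, y i k := Finset.single_le_sum (fun k _ => hynn i k) (mem_univ k)
  have hout : ∀ i, i ≠ 0 → (∑ k, y i k) ≠ 0 → ∀ j, x i j = 0 := by
    intro i hi0 hiy j
    have hd := hdegOut i hi0
    have h1 := hyone i hiy
    have h2 : (∑ j, x i j) = 0 :=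
      le_antisymm (by linarith) (Finset.sum_nonneg fun j _ => hxnn i j)
    exact (Finset.sum_eq_zero_iff_of_nonneg (fun j _ => hxnn i j)).mp h2 j (mem_univ j)
  constructor
  · intro hcut j hj0 hjy
    by_contra hreach
    set R : Fin (n + 1) → Prop := Relation.ReflTransGen (fun a b => x a b = 1) 0 with hR
    set S : Finset (Fin (n + 1)) := univ.filter (fun i => R i ∨ (∑ k, y i k) ≠ 0) with hS
    have hmem : ∀ i, i ∈ S ↔ (R i ∨ (∑ k, y i k) ≠ 0) := by
      intro i; simp [hS]
    have h0S : (0 : Fin (n + 1)) ∈ S :=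
      (hmem 0).mpr (Or.inl Relation.ReflTransGen.refl)
    have hjS : j ∉ S := by
      intro h
      rcases (hmem j).mp h with h | h
      · exact hreach h
      · exact h hjy
    have hSne : S ≠ Finset.univ := fun h => hjS (h ▸ mem_univ j)
    have hmain := hcut S h0S hSne
    have hcut0 : (∑ i ∈ S, ∑ j' ∈ Sᶜ, x i j') = 0 := by
      refine Finset.sum_eq_zero fun i hi => Finset.sum_eq_zero fun j' hj' => ?_
      have hj'S : j' ∉ S := Finset.mem_compl.mp hj'
      rcases (hmem i).mp hi with hiR | hiy
      · rcases hx i j' with h | h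
        · exact h
        · exact absurd ((hmem j').mpr (Or.inl (hiR.tail h))) hj'S
      · have hi0 : i ≠ 0 := by
          intro h; rw [h] at hiy; exact hiy hy0
        exact hout i hi0 hiy j'
    have hdr0 : (∑ j' ∈ Sᶜ, ∑ k, y j' k) = 0 := by
      refine Finset.sum_eq_zero fun j' hj' => ?_
      have hj'S : j' ∉ S := Finset.mem_compl.mp hj'
      by_contra h
      exact hj'S ((hmem j').mpr (Or.inr h))
    rw [hcut0, hdr0] at hmain
    linarith
  · intro hreach S h0S hSne
    have hScne : Sᶜ.Nonempty := by
      rcases Finset.eq_empty_or_nonempty Sᶜ with h | h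
      · exact absurd (by simpa using congrArg compl h) hSne
      · exact h
    obtain ⟨j, hj⟩ := hScne
    have hjS : j ∉ S := Finset.mem_compl.mp hj
    have hj0 : j ≠ 0 := fun h => hjS (h ▸ h0S)
    have hcutnn : 0 ≤ ∑ i ∈ S, ∑ j' ∈ Sᶜ, x i j' :=
      Finset.sum_nonneg fun i _ => Finset.sum_nonneg fun j' _ => hxnn i j'
    have hdrnn : 0 ≤ ∑ j' ∈ Sᶜ, ∑ k, y j' k :=
      Finset.sum_nonneg fun j' _ => Finset.sum_nonneg fun k _ => hynn j' k
    by_cases hjy : (∑ k, y j k) = 0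
    · obtain ⟨p, q, hp, hq, hpq⟩ :=
        cross_cut (S := fun i => i ∈ S) (hreach j hj0 hjy) h0S hjS
      have h1 : x p q ≤ ∑ j' ∈ Sᶜ, x p j' :=
        Finset.single_le_sum (fun j' _ => hxnn p j') (Finset.mem_compl.mpr hq)
      have h2 : (∑ j' ∈ Sᶜ, x p j') ≤ ∑ i ∈ S, ∑ j' ∈ Sᶜ, x i j' :=
        Finset.single_le_sum
          (fun i _ => Finset.sum_nonneg fun j' _ => hxnn i j') hp
      rw [hpq] at h1
      linarith
    · have h1 : (∑ k, y j k) ≤ ∑ j' ∈ Sᶜ, ∑ k, y j' k :=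
        Finset.single_le_sum
          (fun j' _ => Finset.sum_nonneg fun k _ => hynn j' k) hj
      have h2 := hyone j hjy
      linarith
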